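/- Let η ∈ ℂ⟦u,v⟧ be nonzero, let (a,b) be coprime positive integers, set w := (a,b) and μ := w(η). Then for every c ∈ ℂ with c ≠ 0, the order of the substituted series η_c ∈ ℂ⟦t⟧ satisfies order(η_c) ≥ μ, and the set of c ∈ ℂ∖{0} for which order(η_c) > μ is finite. In particular, the minimum of order(η_c) over c ∈ ℂ∖{0} equals μ. (Part (1) of the paper's Proposition 7.15, which interprets the tropical function of the divisor Z(η) as the minimal intersection number with binomial curves u^b = λv^a, via the parametrization t ↦ (c·t^a, t^b) with c^b = λ.) -/

import Mathlib

/-- The coefficient of `η` at the exponent pair `(p, q)`. -/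
noncomputable def coeff2 (η : MvPowerSeries (Fin 2) ℂ) (p q : ℕ) : ℂ :=
  MvPowerSeries.coeff (Finsupp.single 0 p + Finsupp.single 1 q) η

/-- The `(a,b)`-weighted order of `η`: the minimum of `a*p + b*q` over the support of `η`. -/
noncomputable def wOrder (a b : ℕ) (η : MvPowerSeries (Fin 2) ℂ) : ℕ :=
  sInf {n : ℕ | ∃ p q : ℕ, coeff2 η p q ≠ 0 ∧ n = a * p + b * q}

/-- The univariate power series `η_c` obtained from `η ∈ ℂ⟦u,v⟧` by the substitution
`u := c·t^a`, `v := t^b`.  Since `a, b ≥ 1`, the coefficient of `t^N` only involves the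
terms of `η` of bidegree `< (N+1, N+1)`, so it may be computed by substituting into the
corresponding truncation of `η`. -/
noncomputable def substBinomial (a b : ℕ) (c : ℂ) (η : MvPowerSeries (Fin 2) ℂ) :
    PowerSeries ℂ :=
  PowerSeries.mk fun N =>
    PowerSeries.coeff N
      (MvPolynomial.aeval
        ![PowerSeries.C c * PowerSeries.X ^ a, PowerSeries.X ^ b]
        (MvPowerSeries.trunc ℂ (Finsupp.single 0 (N + 1) + Finsupp.single 1 (N + 1)) η))

lemma fin2_decomp (d : Fin 2 →₀ ℕ) :
    d = Finsupp.single 0 (d 0) + Finsupp.single 1 (d 1) := by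
  ext i
  fin_cases i <;> simp [Finsupp.single_apply]

lemma pair_apply (p q : ℕ) :
    ((Finsupp.single (0 : Fin 2) p + Finsupp.single 1 q : Fin 2 →₀ ℕ)) 0 = p ∧
    ((Finsupp.single (0 : Fin 2) p + Finsupp.single 1 q : Fin 2 →₀ ℕ)) 1 = q := by
  constructor <;> simp [Finsupp.single_apply]

lemma pair_lt {p q N : ℕ} (hp : p ≤ N) (hq : q ≤ N) :
    (Finsupp.single (0 : Fin 2) p + Finsupp.single 1 q : Fin 2 →₀ ℕ)
      < Finsupp.single 0 (N + 1) + Finsupp.single 1 (N + 1) := by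
  rw [lt_iff_le_and_ne]
  constructor
  · rw [Finsupp.le_def]
    intro i
    fin_cases i <;> simp [Finsupp.single_apply] <;> omega
  · intro h
    have := congrArg (fun f : Fin 2 →₀ ℕ => f 0) h
    simp only [(pair_apply p q).1, (pair_apply (N+1) (N+1)).1] at this
    omega

lemma coeff_substBinomial (a b : ℕ) (ha : 0 < a) (hb : 0 < b) (c : ℂ)
    (η : MvPowerSeries (Fin 2) ℂ) (N : ℕ) :
    PowerSeries.coeff N (substBinomial a b c η) =
      ∑ pq ∈ (Finset.range (N+1) ×ˢ Finset.range (N+1)).filter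
        (fun pq => a * pq.1 + b * pq.2 = N), coeff2 η pq.1 pq.2 * c ^ pq.1 := by
  rw [substBinomial, PowerSeries.coeff_mk, MvPolynomial.aeval_def, MvPolynomial.eval₂_eq',
    map_sum]
  set n : Fin 2 →₀ ℕ := Finsupp.single 0 (N + 1) + Finsupp.single 1 (N + 1) with hn
  set P := MvPowerSeries.trunc ℂ n η with hP
  have hterm : ∀ d : Fin 2 →₀ ℕ,
      PowerSeries.coeff N ((algebraMap ℂ (PowerSeries ℂ)) (P.coeff d) *
        ∏ i, (![PowerSeries.C c * PowerSeries.X ^ a, PowerSeries.X ^ b]) i ^ d i) =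
      if a * d 0 + b * d 1 = N then P.coeff d * c ^ d 0 else 0 := by
    intro d
    rw [Fin.prod_univ_two]
    simp only [Matrix.cons_val_zero, Matrix.cons_val_one, Matrix.head_cons]
    rw [mul_pow, ← map_pow, ← pow_mul, ← pow_mul, PowerSeries.algebraMap_apply,
      Algebra.algebraMap_self, RingHom.id_apply]
    have : (PowerSeries.C) (P.coeff d) * ((PowerSeries.C) (c ^ d 0) *
        PowerSeries.X ^ (a * d 0) * PowerSeries.X ^ (b * d 1)) =
        (PowerSeries.C) (P.coeff d * c ^ d 0) * PowerSeries.X ^ (a * d 0 + b * d 1) := by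
      rw [map_mul, pow_add]; ring
    rw [this, PowerSeries.coeff_C_mul, PowerSeries.coeff_X_pow]
    by_cases h : a * d 0 + b * d 1 = N
    · rw [if_pos h.symm, if_pos h, mul_one]
    · rw [if_neg (fun hh => h hh.symm), if_neg h, mul_zero]
  simp_rw [hterm]
  rw [Finset.sum_ite, Finset.sum_const_zero, add_zero]
  rw [← Finset.sum_subset (Finset.filter_subset
      (fun pq : ℕ × ℕ => coeff2 η pq.1 pq.2 ≠ 0)
      (((Finset.range (N+1) ×ˢ Finset.range (N+1)).filter
        (fun pq => a * pq.1 + b * pq.2 = N))))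
      (fun x hx hx' => by
        simp only [Finset.mem_filter, not_and, not_not] at hx'
        rw [hx' (Finset.mem_filter.mp hx), zero_mul])]
  refine Finset.sum_nbij' (i := fun d => (d 0, d 1))
    (j := fun pq => Finsupp.single 0 pq.1 + Finsupp.single 1 pq.2) ?_ ?_ ?_ ?_ ?_
  · intro d hd
    simp only [Finset.mem_filter, MvPolynomial.mem_support_iff] at hd
    obtain ⟨hd1, hd2⟩ := hd
    rw [hP, MvPowerSeries.coeff_trunc] at hd1
    split_ifs at hd1 with hdn
    · have h0 : d 0 ≤ a * d 0 := Nat.le_mul_of_pos_left _ ha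
      have h1 : d 1 ≤ b * d 1 := Nat.le_mul_of_pos_left _ hb
      simp only [Finset.mem_filter, Finset.mem_product, Finset.mem_range]
      refine ⟨⟨⟨by omega, by omega⟩, hd2⟩, ?_⟩
      rw [coeff2, ← fin2_decomp]
      exact hd1
    · exact absurd rfl hd1
  · intro pq hpq
    simp only [Finset.mem_filter, Finset.mem_product, Finset.mem_range] at hpq
    obtain ⟨⟨⟨hp, hq⟩, heq⟩, hc⟩ := hpq
    simp only [Finset.mem_filter, MvPolynomial.mem_support_iff]
    rw [(pair_apply pq.1 pq.2).1, (pair_apply pq.1 pq.2).2, hP, MvPowerSeries.coeff_trunc,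
      if_pos (pair_lt (by omega) (by omega))]
    exact ⟨fun h => hc (by rwa [coeff2]), heq⟩
  · intro d _
    exact (fin2_decomp d).symm
  · intro pq _
    exact Prod.ext (pair_apply _ _).1 (pair_apply _ _).2
  · intro d hd
    simp only [Finset.mem_filter, MvPolynomial.mem_support_iff] at hd
    obtain ⟨hd1, hd2⟩ := hd
    rw [hP, MvPowerSeries.coeff_trunc] at hd1 ⊢
    split_ifs at hd1 with hdn
    · rw [if_pos hdn, coeff2, ← fin2_decomp]
    · exact absurd rfl hd1

/-- for `η ≠ 0` and coprime positive `a, b`, with `μ = w(η)`: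
the `t`-adic order of `η_c` is `≥ μ` for every `c ≠ 0`, the set of `c ≠ 0` where it
exceeds `μ` is finite, and in particular the minimum of the orders over `c ≠ 0` is
attained and equals `μ`. -/
theorem order_substBinomial_min (η : MvPowerSeries (Fin 2) ℂ) (hη : η ≠ 0)
    (a b : ℕ) (ha : 0 < a) (hb : 0 < b) (hab : Nat.Coprime a b) :
    (∀ c : ℂ, c ≠ 0 → (wOrder a b η : ℕ∞) ≤ (substBinomial a b c η).order) ∧
      {c : ℂ | c ≠ 0 ∧ (wOrder a b η : ℕ∞) < (substBinomial a b c η).order}.Finite ∧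
      ∃ c : ℂ, c ≠ 0 ∧ (substBinomial a b c η).order = (wOrder a b η : ℕ∞) := by
  set S := {n : ℕ | ∃ p q : ℕ, coeff2 η p q ≠ 0 ∧ n = a * p + b * q} with hSdef
  have hSne : S.Nonempty := by
    obtain ⟨m, hm⟩ : ∃ m, MvPowerSeries.coeff m η ≠ 0 := by
      by_contra h
      push_neg at h
      exact hη (MvPowerSeries.ext fun m => by rw [h m, map_zero])
    exact ⟨a * m 0 + b * m 1, m 0, m 1, by rw [coeff2, ← fin2_decomp]; exact hm, rfl⟩
  have hμmem : wOrder a b η ∈ S := Nat.sInf_mem hSne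
  set μ := wOrder a b η with hμdef
  obtain ⟨p0, q0, hc0, he0⟩ := hμmem
  -- part 1 : order ≥ μ for every c
  have hge : ∀ c : ℂ, (μ : ℕ∞) ≤ (substBinomial a b c η).order := by
    intro c
    apply PowerSeries.le_order
    intro i hi
    rw [Nat.cast_lt] at hi
    rw [coeff_substBinomial a b ha hb c η i]
    apply Finset.sum_eq_zero
    intro pq hpq
    simp only [Finset.mem_filter] at hpq
    by_cases h : coeff2 η pq.1 pq.2 = 0
    · rw [h, zero_mul]
    have : i ∈ S := ⟨pq.1, pq.2, h, hpq.2.symm⟩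
    · exfalso
      have h2 : μ ≤ i := Nat.sInf_le this
      omega
  -- the key polynomial
  set T := (Finset.range (μ+1) ×ˢ Finset.range (μ+1)).filter
      (fun pq => a * pq.1 + b * pq.2 = μ) with hT
  set Q : Polynomial ℂ := ∑ pq ∈ T, Polynomial.C (coeff2 η pq.1 pq.2) * Polynomial.X ^ pq.1
    with hQ
  have hev : ∀ c : ℂ, Q.eval c = PowerSeries.coeff μ (substBinomial a b c η) := by
    intro c
    rw [coeff_substBinomial a b ha hb c η μ, hQ, Polynomial.eval_finset_sum]
    exact Finset.sum_congr rfl fun pq _ => by simp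
  have hp0T : (p0, q0) ∈ T := by
    have h0 : p0 ≤ a * p0 := Nat.le_mul_of_pos_left _ ha
    have h1 : q0 ≤ b * q0 := Nat.le_mul_of_pos_left _ hb
    simp only [hT, Finset.mem_filter, Finset.mem_product, Finset.mem_range]
    exact ⟨⟨by omega, by omega⟩, he0.symm⟩
  have hQcoeff : Q.coeff p0 = coeff2 η p0 q0 := by
    rw [hQ, Polynomial.finset_sum_coeff]
    rw [Finset.sum_eq_single (p0, q0)]
    · simp
    · intro pq hpq hne
      simp only [Finset.mem_filter, Finset.mem_product, Finset.mem_range, hT] at hpq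
      rw [Polynomial.coeff_C_mul, Polynomial.coeff_X_pow]
      have : ¬ pq.1 = p0 := by
        intro h
        apply hne
        have hh : pq.2 = q0 := by
          have h3 := hpq.2
          rw [h] at h3
          have hb2 : b * pq.2 = b * q0 := by omega
          exact Nat.eq_of_mul_eq_mul_left hb hb2
        exact Prod.ext h hh
      rw [if_neg (fun h => this h.symm), mul_zero]
    · intro h
      exact absurd hp0T h
  have hQne : Q ≠ 0 := fun h => hc0 (by rw [← hQcoeff, h, Polynomial.coeff_zero])
  refine ⟨fun c _ => hge c, ?_, ?_⟩
  · apply Set.Finite.subset (Polynomial.finite_setOf_isRoot hQne)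
    intro c hc
    obtain ⟨-, hlt⟩ := hc
    have : PowerSeries.coeff μ (substBinomial a b c η) = 0 :=
      PowerSeries.coeff_of_lt_order μ hlt
    simpa [Polynomial.IsRoot, hev c] using this
  · have hfin : ({x : ℂ | Q.IsRoot x} ∪ {0}).Finite :=
      (Polynomial.finite_setOf_isRoot hQne).union (Set.finite_singleton 0)
    obtain ⟨c, hc⟩ := hfin.infinite_compl.nonempty
    simp only [Set.mem_compl_iff, Set.mem_union, Set.mem_singleton_iff, not_or] at hc
    obtain ⟨hroot, hc0'⟩ := hc
    refine ⟨c, hc0', le_antisymm ?_ (hge c)⟩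
    apply PowerSeries.order_le
    rw [← hev c]
    exact hroot
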